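/- Let S be a Polish semigroup and a ∈ S such that every subsequence of (aⁿ) has a convergent further subsequence. Then the set C of cluster points of (aⁿ) is a compact abelian group under the semigroup multiplication, and if e is its identity then C equals the closure of {e, ae, a²e, …}. -/

import Mathlib

open Filter Topology

/-- The powers `a, a², a³, …` of an element of a semigroup: `pows a n = a^(n+1)`. -/
def pows {S : Type*} [Semigroup S] (a : S) : ℕ → S
  | 0 => a
  | n + 1 => pows a n * a

section Aux

variable {S : Type*} [Semigroup S]

lemma pows_add (a : S) (n : ℕ) : ∀ m, pows a n * pows a m = pows a (n + m + 1)
  | 0 => rfl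
  | m + 1 => by
    show pows a n * (pows a m * a) = _
    rw [← mul_assoc, pows_add a n m]
    rfl

lemma pows_comm (a : S) (n m : ℕ) : pows a n * pows a m = pows a m * pows a n := by
  rw [pows_add, pows_add, Nat.add_comm n m]

variable [TopologicalSpace S]

/-- membership in the cluster set of powers of `a` -/
def InC (a x : S) : Prop :=
  ∃ n : ℕ → ℕ, StrictMono n ∧ Tendsto (fun i => pows a (n i)) atTop (𝓝 x)

variable [ContinuousMul S] {a x y : S}

lemma InC.mul (hx : InC a x) (hy : InC a y) : InC a (x * y) := by
  obtain ⟨n, hn, hnx⟩ := hx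
  obtain ⟨m, hm, hmy⟩ := hy
  refine ⟨fun i => n i + m i + 1, fun i j hij => by
    have := hn hij; have := hm hij; dsimp only; omega, ?_⟩
  have : Tendsto (fun i => pows a (n i) * pows a (m i)) atTop (𝓝 (x * y)) := hnx.mul hmy
  simpa only [pows_add] using this

lemma InC.pows_mul (hx : InC a x) (n : ℕ) : InC a (pows a n * x) := by
  obtain ⟨m, hm, hmx⟩ := hx
  refine ⟨fun i => n + m i + 1, fun i j hij => by have := hm hij; dsimp only; omega, ?_⟩
  have : Tendsto (fun i => pows a n * pows a (m i)) atTop (𝓝 (pows a n * x)) :=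
    (tendsto_const_nhds).mul hmx
  simpa only [pows_add] using this

variable [T2Space S]

lemma InC.comm_pows (hx : InC a x) (m : ℕ) : x * pows a m = pows a m * x := by
  obtain ⟨n, hn, hnx⟩ := hx
  have h1 : Tendsto (fun i => pows a (n i) * pows a m) atTop (𝓝 (x * pows a m)) :=
    hnx.mul tendsto_const_nhds
  have h2 : Tendsto (fun i => pows a (n i) * pows a m) atTop (𝓝 (pows a m * x)) := by
    simp only [fun i => pows_comm a (n i) m]
    exact tendsto_const_nhds.mul hnx
  exact tendsto_nhds_unique h1 h2

lemma InC.comm (hx : InC a x) (hy : InC a y) : x * y = y * x := by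
  obtain ⟨m, hm, hmy⟩ := hy
  have h1 : Tendsto (fun i => x * pows a (m i)) atTop (𝓝 (x * y)) := tendsto_const_nhds.mul hmy
  have h2 : Tendsto (fun i => x * pows a (m i)) atTop (𝓝 (y * x)) := by
    simp only [fun i => hx.comm_pows (m i)]
    exact hmy.mul tendsto_const_nhds
  exact tendsto_nhds_unique h1 h2

lemma InC.div
    (hsub : ∀ n : ℕ → ℕ, StrictMono n → ∃ k : ℕ → ℕ, StrictMono k ∧
      ∃ x : S, Tendsto (fun i => pows a (n (k i))) atTop (𝓝 x))
    (hx : InC a x) (hy : InC a y) : ∃ z, InC a z ∧ x * z = y := by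
  obtain ⟨n, hn, hnx⟩ := hx
  obtain ⟨m, hm, hmy⟩ := hy
  have hmono_add : ∀ (c d : ℕ), m c + d ≤ m (c + d) := by
    intro c d
    induction d with
    | zero => simp
    | succ d ih =>
      have h : m (c + d) < m (c + (d + 1)) := hm (by omega)
      omega
  set σ : ℕ → ℕ := fun j => n j + j + 2 with hσdef
  have hσ : StrictMono σ := fun i j hij => by
    have := hn hij; dsimp only [σ]; omega
  have hmge : ∀ j, σ j ≤ m (σ j) := fun _ => hm.le_apply
  set p : ℕ → ℕ := fun j => m (σ j) - n j - 1 with hpdef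
  have hσval : ∀ j, σ j = n j + j + 2 := fun j => rfl
  have hkey : ∀ j, n j + p j + 1 = m (σ j) := fun j => by
    have h1 := hmge j; have h2 := hσval j; dsimp only [p]; omega
  have hp : StrictMono p := by
    intro i j hij
    have h2 : m (σ i) + (σ j - σ i) ≤ m (σ j) := by
      have := hmono_add (σ i) (σ j - σ i)
      rwa [Nat.add_sub_cancel' (le_of_lt (hσ hij))] at this
    have h3 := hmge i
    have h4 := hσval i
    have h5 := hσval j
    have h6 := hn hij
    dsimp only [p]
    omega
  obtain ⟨k, hk, z, hz⟩ := hsub p hp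
  refine ⟨z, ⟨p ∘ k, hp.comp hk, hz⟩, ?_⟩
  have h1 : Tendsto (fun i => pows a (n (k i)) * pows a (p (k i))) atTop (𝓝 (x * z)) := by
    have := (hnx.comp hk.tendsto_atTop).mul hz
    simpa [Function.comp] using this
  have h2 : Tendsto (fun i => pows a (n (k i)) * pows a (p (k i))) atTop (𝓝 y) := by
    have := hmy.comp ((hσ.comp hk).tendsto_atTop)
    simp only [Function.comp_def] at this
    simpa only [fun i => pows_add a (n (k i)) (p (k i)), fun i => hkey (k i)] using this
  exact tendsto_nhds_unique h1 h2

end Aux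

section Metric

variable {S : Type*} [Semigroup S] [MetricSpace S] {a : S}

lemma InC.approx {y : S} (hy : InC a y) (M : ℕ) (ε : ℝ) (hε : 0 < ε) :
    ∃ N, M < N ∧ dist (pows a N) y < ε := by
  obtain ⟨n, hn, hny⟩ := hy
  obtain ⟨J, hJ⟩ := Metric.tendsto_atTop.1 hny ε hε
  refine ⟨n (max J (M + 1)), ?_, hJ _ (le_max_left _ _)⟩
  calc M < M + 1 := Nat.lt_succ_self M
    _ ≤ max J (M + 1) := le_max_right _ _
    _ ≤ n (max J (M + 1)) := hn.le_apply

lemma seqCompactC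
    (hsub : ∀ n : ℕ → ℕ, StrictMono n → ∃ k : ℕ → ℕ, StrictMono k ∧
      ∃ x : S, Tendsto (fun i => pows a (n (k i))) atTop (𝓝 x)) :
    IsSeqCompact {x : S | InC a x} := by
  intro x hx
  have key : ∀ i M : ℕ, ∃ N, M < N ∧ dist (pows a N) (x i) < 1 / ((i : ℝ) + 1) :=
    fun i M => InC.approx (hx i) M _ (by positivity)
  set g : ℕ → ℕ := fun i =>
    Nat.rec (Classical.choose (key 0 0)) (fun i prev => Classical.choose (key (i + 1) prev)) i
    with hg
  have hgsucc : ∀ i, g i < g (i + 1) ∧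
      dist (pows a (g (i + 1))) (x (i + 1)) < 1 / (((i + 1 : ℕ) : ℝ) + 1) := fun i =>
    Classical.choose_spec (key (i + 1) (g i))
  have hgdist : ∀ i, dist (pows a (g i)) (x i) < 1 / ((i : ℝ) + 1) := by
    intro i
    cases i with
    | zero => exact (Classical.choose_spec (key 0 0)).2
    | succ i => exact (hgsucc i).2
  have hgmono : StrictMono g := strictMono_nat_of_lt_succ fun i => (hgsucc i).1
  obtain ⟨k, hk, z, hz⟩ := hsub g hgmono
  refine ⟨z, ⟨g ∘ k, hgmono.comp hk, hz⟩, k, hk, ?_⟩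
  rw [tendsto_iff_dist_tendsto_zero]
  have hb : ∀ i, dist ((x ∘ k) i) z ≤ 1 / ((i : ℝ) + 1) + dist (pows a (g (k i))) z := by
    intro i
    calc dist (x (k i)) z ≤ dist (x (k i)) (pows a (g (k i))) + dist (pows a (g (k i))) z :=
          dist_triangle _ _ _
      _ ≤ 1 / ((i : ℝ) + 1) + dist (pows a (g (k i))) z := by
          have h1 : dist (x (k i)) (pows a (g (k i))) < 1 / ((k i : ℝ) + 1) := by
            rw [dist_comm]; exact hgdist (k i)
          have h2 : 1 / ((k i : ℝ) + 1) ≤ 1 / ((i : ℝ) + 1) := by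
            apply one_div_le_one_div_of_le (by positivity)
            have h3 : i ≤ k i := hk.le_apply
            exact_mod_cast Nat.succ_le_succ h3
          linarith
  have hlim : Tendsto (fun i : ℕ => 1 / ((i : ℝ) + 1) + dist (pows a (g (k i))) z)
      atTop (𝓝 0) := by
    have h1 : Tendsto (fun i : ℕ => 1 / ((i : ℝ) + 1)) atTop (𝓝 0) :=
      tendsto_one_div_add_atTop_nhds_zero_nat
    have h2 : Tendsto (fun i => dist (pows a (g (k i))) z) atTop (𝓝 0) :=
      tendsto_iff_dist_tendsto_zero.1 hz
    simpa using h1.add h2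
  exact squeeze_zero (fun i => dist_nonneg) hb hlim

end Metric

/-- Let `S` be a Polish semigroup and `a ∈ S` such that every
subsequence of `(aⁿ)` has a convergent further subsequence. Then the set `C` of
cluster points of `(aⁿ)` is a compact abelian group under the semigroup
multiplication, and if `e` is its identity then `C` is the closure of
`{e, ae, a²e, …}`. -/
theorem stmt18 {S : Type*} [Semigroup S] [TopologicalSpace S] [PolishSpace S]
    [ContinuousMul S] (a : S)
    (hsub : ∀ n : ℕ → ℕ, StrictMono n → ∃ k : ℕ → ℕ, StrictMono k ∧
      ∃ x : S, Tendsto (fun i => pows a (n (k i))) atTop (𝓝 x))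
    (C : Set S)
    (hC : C = {x : S | ∃ n : ℕ → ℕ, StrictMono n ∧
      Tendsto (fun i => pows a (n i)) atTop (𝓝 x)}) :
    IsCompact C ∧
    (∀ x ∈ C, ∀ y ∈ C, x * y ∈ C ∧ x * y = y * x) ∧
    (∃ e ∈ C, (∀ x ∈ C, e * x = x ∧ x * e = x) ∧
      ∀ x ∈ C, ∃ y ∈ C, x * y = e ∧ y * x = e) ∧
    (∀ e ∈ C, (∀ x ∈ C, e * x = x ∧ x * e = x) →
      C = closure ({e} ∪ {x : S | ∃ n : ℕ, x = pows a n * e})) := by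
  subst hC
  letI := TopologicalSpace.upgradeIsCompletelyMetrizable S
  have hmemC : ∀ x : S, x ∈ {x : S | ∃ n : ℕ → ℕ, StrictMono n ∧
      Tendsto (fun i => pows a (n i)) atTop (𝓝 x)} ↔ InC a x := fun x => Iff.rfl
  have hcompact : IsCompact {x : S | InC a x} := (seqCompactC hsub).isCompact
  refine ⟨hcompact, fun x hx y hy => ⟨(InC.mul hx hy : InC a (x * y)), InC.comm hx hy⟩, ?_, ?_⟩
  · -- identity and inverses
    obtain ⟨k, hk, x0, hx0t⟩ := hsub id strictMono_id
    have hx0 : InC a x0 := ⟨fun i => k i, hk, hx0t⟩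
    obtain ⟨e, he, hee⟩ := InC.div hsub hx0 hx0
    have hid : ∀ y : S, InC a y → e * y = y := by
      intro y hy
      obtain ⟨z, hz, hxz⟩ := InC.div hsub hx0 hy
      calc e * y = e * (x0 * z) := by rw [hxz]
        _ = (e * x0) * z := (mul_assoc _ _ _).symm
        _ = (x0 * e) * z := by rw [he.comm hx0]
        _ = x0 * z := by rw [hee]
        _ = y := hxz
    refine ⟨e, he, fun x hx => ⟨hid x hx, by rw [InC.comm hx he]; exact hid x hx⟩, ?_⟩
    intro x hx
    obtain ⟨y, hy, hxy⟩ := InC.div hsub hx he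
    exact ⟨y, hy, hxy, by rw [InC.comm hy hx]; exact hxy⟩
  · -- closure characterization
    intro e he hid
    apply Set.Subset.antisymm
    · intro x hx
      obtain ⟨n, hn, hnx⟩ := hx
      have hxe : x * e = x := (hid x ⟨n, hn, hnx⟩).2
      have ht : Tendsto (fun i => pows a (n i) * e) atTop (𝓝 x) := by
        rw [← hxe]; exact hnx.mul tendsto_const_nhds
      exact mem_closure_of_tendsto ht (Eventually.of_forall fun i => Or.inr ⟨n i, rfl⟩)
    · apply closure_minimal
      · rintro x (rfl | ⟨n, rfl⟩)
        · exact he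
        · exact InC.pows_mul he n
      · exact hcompact.isClosed
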